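/- Let p be a positive integer, q ∈ (0,1), s > 0, t > 0, and let m be a positive integer. If m is odd then ψ_{p,q}^{(m+1)}(s+t) ≥ ψ_{p,q}^{(m+1)}(t), and if m is even then ψ_{p,q}^{(m+1)}(s+t) ≤ ψ_{p,q}^{(m+1)}(t). Equivalently, (ln q)^{m+2} ∑_{n=1}^{p} n^{m+1} q^{n t}(q^{n s} - 1)/(1 - q^n) is ≥ 0 when m is odd and ≤ 0 when m is even. -/
import Mathlib


open Finset

/-- The k-th derivative of the (p,q)-digamma function,
`ψ_{p,q}^{(k)}(t) = (ln q)^{k+1} ∑_{n=1}^p n^k q^{n t}/(1 - q^n)`. -/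
noncomputable def psiPQDeriv (p : ℕ) (q : ℝ) (k : ℕ) (t : ℝ) : ℝ :=
  (Real.log q) ^ (k + 1) *
    ∑ n ∈ Finset.Icc 1 p, (n : ℝ) ^ k * q ^ ((n : ℝ) * t) / (1 - q ^ n)

theorem psiPQDeriv_succ_monotonicity (p : ℕ) (hp : 0 < p) (q : ℝ)
    (hq : q ∈ Set.Ioo (0 : ℝ) 1) (s t : ℝ) (hs : 0 < s) (ht : 0 < t)
    (m : ℕ) (hm : 0 < m) :
    ((Odd m → psiPQDeriv p q (m + 1) (s + t) ≥ psiPQDeriv p q (m + 1) t) ∧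
      (Even m → psiPQDeriv p q (m + 1) (s + t) ≤ psiPQDeriv p q (m + 1) t)) ∧
    ((Odd m →
        0 ≤ (Real.log q) ^ (m + 2) *
          ∑ n ∈ Finset.Icc 1 p,
            (n : ℝ) ^ (m + 1) * q ^ ((n : ℝ) * t) * (q ^ ((n : ℝ) * s) - 1) / (1 - q ^ n)) ∧
      (Even m →
        (Real.log q) ^ (m + 2) *
          ∑ n ∈ Finset.Icc 1 p,
            (n : ℝ) ^ (m + 1) * q ^ ((n : ℝ) * t) * (q ^ ((n : ℝ) * s) - 1) / (1 - q ^ n) ≤ 0)) := by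
  obtain ⟨hq0, hq1⟩ := hq
  set L := Real.log q with hL
  -- sum is nonpositive
  have hsum : ∑ n ∈ Finset.Icc 1 p,
      (n : ℝ) ^ (m + 1) * q ^ ((n : ℝ) * t) * (q ^ ((n : ℝ) * s) - 1) / (1 - q ^ n) ≤ 0 := by
    apply Finset.sum_nonpos
    intro n hn
    have hn1 : 1 ≤ n := (Finset.mem_Icc.mp hn).1
    have hnpos : (0 : ℝ) < n := by exact_mod_cast hn1
    have hden : (0 : ℝ) < 1 - q ^ n := by
      have : q ^ n < 1 := pow_lt_one₀ hq0.le hq1 (by omega)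
      linarith
    have hnum : (n : ℝ) ^ (m + 1) * q ^ ((n : ℝ) * t) * (q ^ ((n : ℝ) * s) - 1) ≤ 0 := by
      have h1 : (0 : ℝ) ≤ (n : ℝ) ^ (m + 1) * q ^ ((n : ℝ) * t) :=
        mul_nonneg (pow_nonneg hnpos.le _) (Real.rpow_nonneg hq0.le _)
      have h2 : q ^ ((n : ℝ) * s) - 1 ≤ 0 := by
        have := Real.rpow_lt_one hq0.le hq1 (mul_pos hnpos hs)
        linarith
      exact mul_nonpos_of_nonneg_of_nonpos h1 h2
    exact div_nonpos_of_nonpos_of_nonneg hnum hden.le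
  have hLneg : L < 0 := Real.log_neg hq0 hq1
  -- odd case sign
  have hodd : Odd m → 0 ≤ L ^ (m + 2) *
      ∑ n ∈ Finset.Icc 1 p,
        (n : ℝ) ^ (m + 1) * q ^ ((n : ℝ) * t) * (q ^ ((n : ℝ) * s) - 1) / (1 - q ^ n) := by
    intro hmo
    have : Odd (m + 2) := by simpa using hmo.add_even (even_two)
    have hLp : L ^ (m + 2) ≤ 0 := Odd.pow_nonpos this hLneg.le
    nlinarith
  have heven : Even m → L ^ (m + 2) *
      ∑ n ∈ Finset.Icc 1 p,
        (n : ℝ) ^ (m + 1) * q ^ ((n : ℝ) * t) * (q ^ ((n : ℝ) * s) - 1) / (1 - q ^ n) ≤ 0 := by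
    intro hme
    have : Even (m + 2) := hme.add (even_two)
    have hLp : 0 ≤ L ^ (m + 2) := this.pow_nonneg L
    exact mul_nonpos_of_nonneg_of_nonpos hLp hsum
  -- difference identity
  have hdiff : psiPQDeriv p q (m + 1) (s + t) - psiPQDeriv p q (m + 1) t =
      L ^ (m + 2) * ∑ n ∈ Finset.Icc 1 p,
        (n : ℝ) ^ (m + 1) * q ^ ((n : ℝ) * t) * (q ^ ((n : ℝ) * s) - 1) / (1 - q ^ n) := by
    unfold psiPQDeriv
    rw [← mul_sub, ← Finset.sum_sub_distrib]
    congr 1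
    apply Finset.sum_congr rfl
    intro n hn
    have : q ^ ((n : ℝ) * (s + t)) = q ^ ((n : ℝ) * s) * q ^ ((n : ℝ) * t) := by
      rw [← Real.rpow_add hq0]; ring_nf
    rw [this]
    ring
  refine ⟨⟨fun hmo => ?_, fun hme => ?_⟩, hodd, heven⟩
  · have := hodd hmo; rw [← hdiff] at this; linarith
  · have := heven hme; rw [← hdiff] at this; linarith
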